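/- Let Δ̃ be the group with presentation ⟨g₁, g₂, g₃ | g₁^p = g₂^q = g₃^r = g₁g₂g₃⟩ where p, q, r ≥ 2 are pairwise coprime with 1/p + 1/q + 1/r < 1. Then the commutator subgroup Π = [Δ̃, Δ̃] has index d = pqr − qr − pr − pq in Δ̃, i.e. the abelianization of Δ̃ is cyclic of order d. -/

import Mathlib

/-- Relators of the centrally extended triangle group
`Δ̃(p,q,r) = ⟨g₁,g₂,g₃ | g₁^p = g₂^q = g₃^r = g₁g₂g₃⟩`. -/
def extTriangleRels (p q r : ℕ) : Set (FreeGroup (Fin 3)) :=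
  {FreeGroup.of 0 ^ p * (FreeGroup.of 1 ^ q)⁻¹,
    FreeGroup.of 1 ^ q * (FreeGroup.of 2 ^ r)⁻¹,
    FreeGroup.of 2 ^ r * (FreeGroup.of 0 * FreeGroup.of 1 * FreeGroup.of 2)⁻¹}

/-- The centrally extended `(p,q,r)` triangle group. -/
def ExtTriangleGroup (p q r : ℕ) := PresentedGroup (extTriangleRels p q r)

instance (p q r : ℕ) : Group (ExtTriangleGroup p q r) := by
  unfold ExtTriangleGroup; infer_instance

namespace ExtTriangleAux

theorem add_main {M : Type*} [AddCommGroup M] (a b c : M) (P Q R m n k : ℤ)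
    (hm : m*(Q+R) + n*R = 1)
    (hk : k = m*(R*(P-1)) + n*(R*P - R - P))
    (hab : P • a = Q • b) (hbc : Q • b = R • c) (hca : R • c = a + b + c) :
    b = k • a ∧ c = (P - 1 - k) • a ∧ (P*Q*R - Q*R - P*R - P*Q) • a = 0 := by
  have hc : c = (P-1) • a - b := by
    linear_combination (norm := module) -hab - hbc - hca
  have hbr : R • b = (R*P - R - P) • a := by
    linear_combination (norm := module) hab + hbc + R • hc
  have hbqr : (Q+R) • b = (R*(P-1)) • a := by
    linear_combination (norm := module) hbc + R • hc
  have hone : b = (m*(Q+R)+n*R) • b := by rw [hm, one_smul]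
  have hbk : b = k • a := by
    rw [hk]
    linear_combination (norm := module) hone + m • hbqr + n • hbr
  have e1 : (R*k - (R*P - R - P)) • a = 0 := by
    linear_combination (norm := module) hbr - R • hbk
  have e2 : ((Q+R)*k - R*(P-1)) • a = 0 := by
    linear_combination (norm := module) hbqr - (Q+R) • hbk
  have hd : (P*Q*R - Q*R - P*R - P*Q) • a = 0 := by
    have hdd : P*Q*R - Q*R - P*R - P*Q
        = R*((Q+R)*k - R*(P-1)) - (Q+R)*(R*k - (R*P - R - P)) := by ring
    rw [hdd]
    linear_combination (norm := module) R • e2 - (Q+R) • e1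
  exact ⟨hbk, by rw [hc, hbk]; module, hd⟩

theorem mul_main {A : Type*} [CommGroup A] (a b c : A) (P Q R m n k : ℤ)
    (hm : m*(Q+R) + n*R = 1)
    (hk : k = m*(R*(P-1)) + n*(R*P - R - P))
    (hab : a ^ P = b ^ Q) (hbc : b ^ Q = c ^ R) (hca : c ^ R = a * b * c) :
    b = a ^ k ∧ c = a ^ (P - 1 - k) ∧ a ^ (P*Q*R - Q*R - P*R - P*Q) = 1 := by
  have := add_main (M := Additive A) (Additive.ofMul a) (Additive.ofMul b) (Additive.ofMul c)
    P Q R m n k hm hk (by simpa [← ofMul_zpow] using congrArg Additive.ofMul hab)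
    (by simpa [← ofMul_zpow] using congrArg Additive.ofMul hbc)
    (by simpa [← ofMul_zpow, ← ofMul_mul] using congrArg Additive.ofMul hca)
  refine ⟨?_, ?_, ?_⟩
  · simpa [← ofMul_zpow] using this.1
  · simpa [← ofMul_zpow] using this.2.1
  · simpa [← ofMul_zpow] using this.2.2

theorem zpow_eq_zpow_of {A : Type*} [Group A] (a : A) {d x y : ℤ}
    (hd : a ^ d = 1) (h : d ∣ (x - y)) : a ^ x = a ^ y := by
  obtain ⟨t, ht⟩ := h
  have hx : x = y + d * t := by linarith
  rw [hx, zpow_add, zpow_mul, hd, one_zpow, mul_one]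

theorem mk_rel_eq_one {α : Type*} {rels : Set (FreeGroup α)} {x : FreeGroup α} (hx : x ∈ rels) :
    PresentedGroup.mk rels x = 1 :=
  (QuotientGroup.eq_one_iff _).mpr (Subgroup.subset_normalClosure hx)

end ExtTriangleAux

namespace ExtTriangleAux

theorem key (p q r D : ℕ) (hp : 2 ≤ p) (hq : 2 ≤ q) (hr : 2 ≤ r)
    (hpq : Nat.Coprime p q) (hqr : Nat.Coprime q r) (hpr : Nat.Coprime p r)
    (hD : q*r + p*r + p*q + D = p*q*r) (hD0 : 0 < D) :
    Nonempty (Abelianization (PresentedGroup (extTriangleRels p q r)) ≃* Multiplicative (ZMod D)) := by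
  haveI : NeZero D := ⟨hD0.ne'⟩
  set G := PresentedGroup (extTriangleRels p q r)
  set A := Abelianization G
  -- integer abbreviations
  have hDcast : (q:ℤ)*r + (p:ℤ)*r + (p:ℤ)*q + (D:ℤ) = (p:ℤ)*q*r := by exact_mod_cast hD
  -- Bezout for q, r
  obtain ⟨u, v, huv⟩ : ∃ u v : ℤ, u*q + v*r = 1 := by
    obtain ⟨u, v, huv⟩ := Nat.isCoprime_iff_coprime.mpr hqr
    exact ⟨u, v, by linarith [huv]⟩
  have hm : u*((q:ℤ)+r) + (v-u)*r = 1 := by linear_combination huv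
  -- coprimality of q*r with D
  have hcq : IsCoprime (q:ℤ) (D:ℤ) := by
    have h1 : IsCoprime (q:ℤ) (-((p:ℤ)*r)) :=
      ((Nat.isCoprime_iff_coprime.mpr hpq.symm).mul_right
        (Nat.isCoprime_iff_coprime.mpr hqr)).neg_right
    have h2 := h1.add_mul_left_right ((p:ℤ)*r - r - p)
    have h3 : -((p:ℤ)*r) + (q:ℤ)*((p:ℤ)*r - r - p) = (D:ℤ) := by linarith
    rwa [h3] at h2
  have hcr : IsCoprime (r:ℤ) (D:ℤ) := by
    have h1 : IsCoprime (r:ℤ) (-((p:ℤ)*q)) :=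
      ((Nat.isCoprime_iff_coprime.mpr hpr.symm).mul_right
        (Nat.isCoprime_iff_coprime.mpr hqr.symm)).neg_right
    have h2 := h1.add_mul_left_right ((p:ℤ)*q - q - p)
    have h3 : -((p:ℤ)*q) + (r:ℤ)*((p:ℤ)*q - q - p) = (D:ℤ) := by linarith
    rwa [h3] at h2
  obtain ⟨e, f, hef⟩ : ∃ e f : ℤ, e*((q:ℤ)*r) + f*(D:ℤ) = 1 := by
    obtain ⟨e, f, hef⟩ := hcq.mul_left hcr
    exact ⟨e, f, hef⟩
  -- generators of the abelianization
  set a : A := Abelianization.of (PresentedGroup.of 0) with ha_def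
  set b : A := Abelianization.of (PresentedGroup.of 1) with hb_def
  set c : A := Abelianization.of (PresentedGroup.of 2) with hc_def
  have hab : a ^ (p:ℤ) = b ^ (q:ℤ) := by
    have h1 : PresentedGroup.mk (extTriangleRels p q r)
        (FreeGroup.of 0 ^ p * (FreeGroup.of 1 ^ q)⁻¹) = 1 := mk_rel_eq_one (by left; rfl)
    simp only [map_mul, map_inv, map_pow, mul_inv_eq_one] at h1
    have := congrArg Abelianization.of h1
    simpa [ha_def, hb_def, map_pow, zpow_natCast, PresentedGroup.of] using this
  have hbc : b ^ (q:ℤ) = c ^ (r:ℤ) := by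
    have h1 : PresentedGroup.mk (extTriangleRels p q r)
        (FreeGroup.of 1 ^ q * (FreeGroup.of 2 ^ r)⁻¹) = 1 := mk_rel_eq_one (by right; left; rfl)
    simp only [map_mul, map_inv, map_pow, mul_inv_eq_one] at h1
    have := congrArg Abelianization.of h1
    simpa [hb_def, hc_def, map_pow, zpow_natCast, PresentedGroup.of] using this
  have hca : c ^ (r:ℤ) = a * b * c := by
    have h1 : PresentedGroup.mk (extTriangleRels p q r)
        (FreeGroup.of 2 ^ r * (FreeGroup.of 0 * FreeGroup.of 1 * FreeGroup.of 2)⁻¹) = 1 :=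
      mk_rel_eq_one (by right; right; rfl)
    simp only [map_mul, map_inv, map_pow, mul_inv_eq_one] at h1
    have := congrArg Abelianization.of h1
    simpa [ha_def, hb_def, hc_def, map_pow, map_mul, zpow_natCast, PresentedGroup.of] using this
  obtain ⟨hbk, hck, had⟩ := mul_main a b c (p:ℤ) (q:ℤ) (r:ℤ) u (v-u) _ hm rfl hab hbc hca
  set k : ℤ := u*((r:ℤ)*((p:ℤ)-1)) + (v-u)*((r:ℤ)*(p:ℤ) - r - p) with hk_def
  have haD : a ^ (D:ℤ) = 1 := by
    have hdD : (p:ℤ)*q*r - (q:ℤ)*r - (p:ℤ)*r - (p:ℤ)*q = (D:ℤ) := by linarith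
    rwa [hdD] at had
  -- the homomorphism to ZMod D
  set f0 : Fin 3 → Multiplicative (ZMod D) :=
    ![Multiplicative.ofAdd ((q*r : ℕ) : ZMod D), Multiplicative.ofAdd ((p*r : ℕ) : ZMod D),
      Multiplicative.ofAdd ((p*q : ℕ) : ZMod D)] with hf0_def
  have hpqr0 : ((p*q*r : ℕ) : ZMod D) = ((q*r + p*r + p*q : ℕ) : ZMod D) := by
    rw [← hD]; push_cast; simp [ZMod.natCast_self]
  have hpqr1 : ((p:ZMod D))*q*r = (q:ZMod D)*r + (p:ZMod D)*r + (p:ZMod D)*q := by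
    have := hpqr0
    push_cast at this
    linear_combination this
  have hrel : ∀ w ∈ extTriangleRels p q r, FreeGroup.lift f0 w = 1 := by
    rintro w (rfl | rfl | rfl) <;>
      · simp only [map_mul, map_inv, map_pow, FreeGroup.lift_apply_of, hf0_def,
          Matrix.cons_val_zero, Matrix.cons_val_one, Matrix.head_cons, Matrix.cons_val_two,
          Matrix.tail_cons, mul_inv_eq_one, ← ofAdd_nsmul, ← ofAdd_add, nsmul_eq_mul]
        congr 1
        push_cast
        first
        | linear_combination hpqr1
        | ring1
  set Φ : G →* Multiplicative (ZMod D) := PresentedGroup.toGroup hrel with hΦ_def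
  set Φab : A →* Multiplicative (ZMod D) := Abelianization.lift Φ with hΦab_def
  have hΦa : Φab a = Multiplicative.ofAdd ((q*r : ℕ) : ZMod D) := by
    rw [hΦab_def, ha_def, Abelianization.lift_apply_of, hΦ_def, PresentedGroup.toGroup.of]
    rfl
  have hΦb : Φab b = Multiplicative.ofAdd ((p*r : ℕ) : ZMod D) := by
    rw [hΦab_def, hb_def, Abelianization.lift_apply_of, hΦ_def, PresentedGroup.toGroup.of]
    rfl
  have hΦc : Φab c = Multiplicative.ofAdd ((p*q : ℕ) : ZMod D) := by
    rw [hΦab_def, hc_def, Abelianization.lift_apply_of, hΦ_def, PresentedGroup.toGroup.of]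
    rfl
  -- the inverse homomorphism
  set τ : A := a ^ e with hτ_def
  have hτD : ((D:ℕ):ℤ) • Additive.ofMul τ = 0 := by
    rw [← ofMul_zpow, hτ_def, ← zpow_mul]
    have : e * (D:ℤ) = (D:ℤ) * e := by ring
    rw [mul_comm, zpow_mul, haD, one_zpow]
    rfl
  set F : ℤ →+ Additive A := zmultiplesHom (Additive A) (Additive.ofMul τ) with hF_def
  have hF : F ((D:ℕ):ℤ) = 0 := hτD
  set σ : Multiplicative (ZMod D) →* A :=
    AddMonoidHom.toMultiplicativeLeft (ZMod.lift D ⟨F, hF⟩) with hσ_def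
  have hσz : ∀ z : ℤ, σ (Multiplicative.ofAdd ((z : ZMod D))) = τ ^ z := by
    intro z
    simp [hσ_def, AddMonoidHom.coe_toMultiplicativeLeft, ZMod.lift_coe, hF_def]
  -- facts in ZMod D
  have hE : (e : ZMod D) * ((q*r : ℕ) : ZMod D) = 1 := by
    have h1 := congrArg (Int.cast : ℤ → ZMod D) hef
    push_cast at h1
    rw [ZMod.natCast_self] at h1
    push_cast
    linear_combination h1
  have hbZ : (((p*r : ℕ)) : ZMod D) = (k : ZMod D) * (((q*r : ℕ)) : ZMod D) := by
    have h1 := congrArg Φab hbk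
    rw [map_zpow, hΦa, hΦb] at h1
    have h2 := congrArg Multiplicative.toAdd h1
    simp only [toAdd_zpow, toAdd_ofAdd, zsmul_eq_mul] at h2
    exact h2
  have hcZ : (((p*q : ℕ)) : ZMod D) = (((p:ℤ) - 1 - k : ℤ) : ZMod D) * (((q*r : ℕ)) : ZMod D) := by
    have h1 := congrArg Φab hck
    rw [map_zpow, hΦa, hΦc] at h1
    have h2 := congrArg Multiplicative.toAdd h1
    simp only [toAdd_zpow, toAdd_ofAdd, zsmul_eq_mul] at h2
    exact h2
  have hdvd1 : (D:ℤ) ∣ e * ((q*r : ℕ):ℤ) - 1 := ⟨-f, by push_cast; linarith⟩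
  have hdvd2 : (D:ℤ) ∣ e * ((p*r : ℕ):ℤ) - k := by
    rw [← ZMod.intCast_zmod_eq_zero_iff_dvd]
    push_cast
    push_cast at hbZ hE
    linear_combination (e : ZMod D) * hbZ + (k : ZMod D) * hE
  have hdvd3 : (D:ℤ) ∣ e * ((p*q : ℕ):ℤ) - ((p:ℤ) - 1 - k) := by
    rw [← ZMod.intCast_zmod_eq_zero_iff_dvd]
    push_cast
    push_cast at hcZ hE
    linear_combination (e : ZMod D) * hcZ + (((p:ZMod D) - 1 - (k : ZMod D))) * hE
  -- left inverse
  have hcast : ∀ n : ℕ, ((n : ℕ) : ZMod D) = (((n:ℕ):ℤ) : ZMod D) := by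
    intro n; push_cast; rfl
  have hL : σ.comp Φab = MonoidHom.id A := by
    apply Abelianization.hom_ext
    apply PresentedGroup.ext
    intro x
    fin_cases x
    · show σ (Φab a) = a
      rw [hΦa, hcast, hσz, hτ_def, ← zpow_mul]
      calc a ^ (e * ((q*r : ℕ):ℤ)) = a ^ (1:ℤ) := zpow_eq_zpow_of a haD hdvd1
        _ = a := zpow_one a
    · show σ (Φab b) = b
      rw [hΦb, hcast, hσz, hτ_def, ← zpow_mul, hbk]
      exact zpow_eq_zpow_of a haD hdvd2
    · show σ (Φab c) = c
      rw [hΦc, hcast, hσz, hτ_def, ← zpow_mul, hck]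
      exact zpow_eq_zpow_of a haD hdvd3
  -- right inverse
  have hR : Φab.comp σ = MonoidHom.id (Multiplicative (ZMod D)) := by
    apply MonoidHom.ext
    intro x
    obtain ⟨z, hz⟩ := ZMod.intCast_surjective (Multiplicative.toAdd x)
    have hx : x = Multiplicative.ofAdd ((z : ZMod D)) := by rw [hz]; rfl
    rw [MonoidHom.comp_apply, hx, hσz, hτ_def, ← zpow_mul, map_zpow, hΦa,
      MonoidHom.id_apply]
    apply Multiplicative.toAdd.injective
    simp only [toAdd_zpow, toAdd_ofAdd, zsmul_eq_mul]
    push_cast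
    push_cast at hE
    linear_combination (z : ZMod D) * hE
  exact ⟨MonoidHom.toMulEquiv Φab σ hL hR⟩

end ExtTriangleAux

/-- For `p, q, r ≥ 2` pairwise coprime with `1/p + 1/q + 1/r < 1`, the commutator subgroup
`Π = [Δ̃, Δ̃]` of `Δ̃ = ⟨g₁,g₂,g₃ | g₁^p = g₂^q = g₃^r = g₁g₂g₃⟩` has index
`d = pqr − qr − pr − pq`; i.e. the abelianization of `Δ̃` is cyclic of order `d`. -/
theorem extTriangleGroup_commutator_index (p q r : ℕ) (hp : 2 ≤ p) (hq : 2 ≤ q) (hr : 2 ≤ r)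
    (hpq : Nat.Coprime p q) (hqr : Nat.Coprime q r) (hpr : Nat.Coprime p r)
    (h : (p : ℚ)⁻¹ + (q : ℚ)⁻¹ + (r : ℚ)⁻¹ < 1) :
    ((commutator (ExtTriangleGroup p q r)).index : ℤ)
        = (p : ℤ) * q * r - q * r - p * r - p * q ∧
      IsCyclic (Abelianization (ExtTriangleGroup p q r)) := by
  have hp0 : (0:ℚ) < (p:ℚ) := by exact_mod_cast (by omega : 0 < p)
  have hq0 : (0:ℚ) < (q:ℚ) := by exact_mod_cast (by omega : 0 < q)
  have hr0 : (0:ℚ) < (r:ℚ) := by exact_mod_cast (by omega : 0 < r)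
  have hltQ : ((q:ℚ)*r + (p:ℚ)*r + (p:ℚ)*q) < (p:ℚ)*q*r := by
    have h' := h
    rw [inv_eq_one_div, inv_eq_one_div, inv_eq_one_div, div_add_div _ _ (ne_of_gt hp0)
      (ne_of_gt hq0), div_add_div _ _ (by positivity) (ne_of_gt hr0),
      div_lt_one (by positivity)] at h'
    nlinarith [h']
  have hlt : q*r + p*r + p*q < p*q*r := by exact_mod_cast hltQ
  obtain ⟨D, hD⟩ : ∃ D : ℕ, q*r + p*r + p*q + D = p*q*r := ⟨p*q*r - (q*r+p*r+p*q), by omega⟩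
  have hD0 : 0 < D := by omega
  obtain ⟨eqv⟩ := ExtTriangleAux.key p q r D hp hq hr hpq hqr hpr hD hD0
  have eqv' : Abelianization (ExtTriangleGroup p q r) ≃* Multiplicative (ZMod D) := eqv
  constructor
  · have hidx : (commutator (ExtTriangleGroup p q r)).index
        = Nat.card (Abelianization (ExtTriangleGroup p q r)) := rfl
    rw [hidx, Nat.card_congr eqv'.toEquiv]
    have hcard : Nat.card (Multiplicative (ZMod D)) = D := by
      rw [show Nat.card (Multiplicative (ZMod D)) = Nat.card (ZMod D) from
        Nat.card_congr Multiplicative.toAdd, Nat.card_zmod]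
    rw [hcard]
    have hDz : (q:ℤ)*r + (p:ℤ)*r + (p:ℤ)*q + (D:ℤ) = (p:ℤ)*q*r := by exact_mod_cast hD
    linarith
  · exact isCyclic_of_surjective eqv'.symm.toMonoidHom eqv'.symm.surjective
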